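/- Bisimulation equivalence is a congruence with respect to the operators of ctACPps+REC: for all closed ctACPps+REC process terms p,q,p′,q′, every proposition φ, and every H⊆A, if p ↔ q and p′ ↔ q′ then p+p′ ↔ q+q′, p·p′ ↔ q·q′, φ:→p ↔ φ:→q, φ⌃p ↔ φ⌃q, p∥p′ ↔ q∥q′, p⌊⌊p′ ↔ q⌊⌊q′, p|p′ ↔ q|q′, and ∂_H(p) ↔ ∂_H(q). -/
import Mathlib


set_option autoImplicit true
set_option maxHeartbeats 1000000

/-- The three truth values of LP→⊥: true, false, both. -/
inductive V3 : Type
  | t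
  | f
  | b
  deriving DecidableEq

/-- Formulas of LP→⊥ over propositional variables of type `α`. -/
inductive Fml (α : Type) : Type
  | var : α → Fml α
  | bot : Fml α
  | neg : Fml α → Fml α
  | conj : Fml α → Fml α → Fml α
  | disj : Fml α → Fml α → Fml α
  | imp : Fml α → Fml α → Fml α

namespace Fml

/-- ⊤ abbreviates ¬⊥. -/
def top {α : Type} : Fml α := neg bot

/-- A↔B abbreviates (A→B)∧(B→A). -/
def iff' {α : Type} (A B : Fml α) : Fml α := conj (imp A B) (imp B A)

end Fml

/-- LP→⊥ truth table for negation. -/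
def negT : V3 → V3
  | .f => .t
  | .t => .f
  | .b => .b

/-- LP→⊥ truth table for conjunction. -/
def conjT : V3 → V3 → V3
  | .f, _ => .f
  | _, .f => .f
  | .t, .t => .t
  | _, _ => .b

/-- LP→⊥ truth table for disjunction. -/
def disjT : V3 → V3 → V3
  | .t, _ => .t
  | _, .t => .t
  | .f, .f => .f
  | _, _ => .b

/-- LP→⊥ truth table for implication. -/
def impT : V3 → V3 → V3
  | .f, _ => .t
  | _, y => y

/-- The LP→⊥ valuation determined by an assignment `σ` of truth values to variables. -/
def eval {α : Type} (σ : α → V3) : Fml α → V3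
  | .var x => σ x
  | .bot => .f
  | .neg A => negT (eval σ A)
  | .conj A B => conjT (eval σ A) (eval σ B)
  | .disj A B => disjT (eval σ A) (eval σ B)
  | .imp A B => impT (eval σ A) (eval σ B)

/-- Logical equivalence in LP→⊥: the same value under every valuation. -/
def FEquiv {α : Type} (A B : Fml α) : Prop := ∀ σ : α → V3, eval σ A = eval σ B

/-- `φ ∈ [⊥]`: `φ` is logically equivalent to ⊥. -/
def EqBot {α : Type} (φ : Fml α) : Prop := ∀ σ : α → V3, eval σ φ = V3.f

/-- Semantic consequence in LP→⊥ (designated values t and b). -/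
def SemCons {α : Type} (Γ : Set (Fml α)) (A : Fml α) : Prop :=
  ∀ σ : α → V3, (∀ C ∈ Γ, eval σ C ≠ V3.f) → eval σ A ≠ V3.f

/-- The Hilbert system of LP→⊥, with hypotheses `Γ`. -/
inductive Hilb {α : Type} (Γ : Set (Fml α)) : Fml α → Prop
  | hyp {A : Fml α} : A ∈ Γ → Hilb Γ A
  | mp {A B : Fml α} : Hilb Γ (A.imp B) → Hilb Γ A → Hilb Γ B
  | ax1 (A B : Fml α) : Hilb Γ (A.imp (B.imp A))
  | ax2 (A B C : Fml α) : Hilb Γ ((A.imp (B.imp C)).imp ((A.imp B).imp (A.imp C)))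
  | ax3 (A B : Fml α) : Hilb Γ (((A.imp B).imp A).imp A)
  | ax4 (A : Fml α) : Hilb Γ (Fml.bot.imp A)
  | ax5 (A B : Fml α) : Hilb Γ ((A.conj B).imp A)
  | ax6 (A B : Fml α) : Hilb Γ ((A.conj B).imp B)
  | ax7 (A B : Fml α) : Hilb Γ (A.imp (B.imp (A.conj B)))
  | ax8 (A B : Fml α) : Hilb Γ (A.imp (A.disj B))
  | ax9 (A B : Fml α) : Hilb Γ (B.imp (A.disj B))
  | ax10 (A B C : Fml α) : Hilb Γ ((A.imp C).imp ((B.imp C).imp ((A.disj B).imp C)))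
  | ax11 (A : Fml α) : Hilb Γ (Fml.iff' A.neg.neg A)
  | ax12 (A B : Fml α) : Hilb Γ (Fml.iff' (A.imp B).neg (A.conj B.neg))
  | ax13 (A B : Fml α) : Hilb Γ (Fml.iff' (A.conj B).neg (A.neg.disj B.neg))
  | ax14 (A B : Fml α) : Hilb Γ (Fml.iff' (A.disj B).neg (A.neg.conj B.neg))
  | ax15 (A : Fml α) : Hilb Γ (A.disj A.neg)

/-- The internalization (A↔B)∧(¬A↔¬B) of logical equivalence. -/
def InternEq {α : Type} (φ ψ : Fml α) : Fml α :=
  (Fml.iff' φ ψ).conj (Fml.iff' φ.neg ψ.neg)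

/-- Derivable equality of propositions: the least congruence containing the
instances of axiom IMP (φ = ψ whenever ⊢ (φ↔ψ)∧(¬φ↔¬ψ)). -/
inductive PropEq {α : Type} : Fml α → Fml α → Prop
  | imp {φ ψ} : Hilb (∅ : Set (Fml α)) (InternEq φ ψ) → PropEq φ ψ
  | refl (φ) : PropEq φ φ
  | symm {φ ψ} : PropEq φ ψ → PropEq ψ φ
  | trans {φ ψ χ} : PropEq φ ψ → PropEq ψ χ → PropEq φ χ
  | negC {φ ψ} : PropEq φ ψ → PropEq φ.neg ψ.neg
  | conjC {φ ψ φ' ψ'} : PropEq φ ψ → PropEq φ' ψ' → PropEq (φ.conj φ') (ψ.conj ψ')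
  | disjC {φ ψ φ' ψ'} : PropEq φ ψ → PropEq φ' ψ' → PropEq (φ.disj φ') (ψ.disj ψ')
  | impC {φ ψ φ' ψ'} : PropEq φ ψ → PropEq φ' ψ' → PropEq (φ.imp φ') (ψ.imp ψ')

/-- Process terms of ctACPps+REC: the ctACPps operators together with process
variables `pvar X` and, for each recursive specification E = {X = t_X | X ∈ V}
(represented by `V : ℕ → Prop` and `t : ℕ → RT α Act`) and each `X`, a constant
`rec V t X` standing for ⟨X|E⟩. -/
inductive RT (α Act : Type) : Type
  | act : Act → RT α Act
  | delta : RT α Act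
  | nex : RT α Act
  | alt : RT α Act → RT α Act → RT α Act
  | seq : RT α Act → RT α Act → RT α Act
  | gc : Fml α → RT α Act → RT α Act
  | se : Fml α → RT α Act → RT α Act
  | par : RT α Act → RT α Act → RT α Act
  | lm : RT α Act → RT α Act → RT α Act
  | cm : RT α Act → RT α Act → RT α Act
  | encap : Set Act → RT α Act → RT α Act
  | pvar : ℕ → RT α Act
  | rcn : (ℕ → Prop) → (ℕ → RT α Act) → ℕ → RT α Act

/-- The constant corresponding to an element of A ∪ {δ} (encoded as `Option Act`,
with `none` standing for δ). -/
def actd {α Act : Type} : Option Act → RT α Act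
  | some a => .act a
  | none => .delta

section
variable {α Act : Type}

/-- A term is a plain ctACPps term: it contains no recursion constants. -/
def Plain : RT α Act → Prop
  | .act _ => True
  | .delta => True
  | .nex => True
  | .alt p q => Plain p ∧ Plain q
  | .seq p q => Plain p ∧ Plain q
  | .gc _ p => Plain p
  | .se _ p => Plain p
  | .par p q => Plain p ∧ Plain q
  | .lm p q => Plain p ∧ Plain q
  | .cm p q => Plain p ∧ Plain q
  | .encap _ p => Plain p
  | .pvar _ => True
  | .rcn _ _ _ => False

/-- All process variables occurring in the term belong to `V`. -/
def VarsIn (V : ℕ → Prop) : RT α Act → Prop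
  | .act _ => True
  | .delta => True
  | .nex => True
  | .alt p q => VarsIn V p ∧ VarsIn V q
  | .seq p q => VarsIn V p ∧ VarsIn V q
  | .gc _ p => VarsIn V p
  | .se _ p => VarsIn V p
  | .par p q => VarsIn V p ∧ VarsIn V q
  | .lm p q => VarsIn V p ∧ VarsIn V q
  | .cm p q => VarsIn V p ∧ VarsIn V q
  | .encap _ p => VarsIn V p
  | .pvar X => V X
  | .rcn _ _ _ => True

/-- The term contains no (free) process variables. -/
def Closed : RT α Act → Prop
  | .act _ => True
  | .delta => True
  | .nex => True
  | .alt p q => Closed p ∧ Closed q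
  | .seq p q => Closed p ∧ Closed q
  | .gc _ p => Closed p
  | .se _ p => Closed p
  | .par p q => Closed p ∧ Closed q
  | .lm p q => Closed p ∧ Closed q
  | .cm p q => Closed p ∧ Closed q
  | .encap _ p => Closed p
  | .pvar _ => False
  | .rcn _ _ _ => True

/-- The term is an action constant. -/
def IsAct : RT α Act → Prop
  | .act _ => True
  | _ => False

/-- All occurrences of the variable `Y` in the term are guarded, i.e. lie within
a subterm of the form a·t′ with a ∈ A. -/
def Guarded (Y : ℕ) : RT α Act → Prop
  | .act _ => True
  | .delta => True
  | .nex => True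
  | .alt p q => Guarded Y p ∧ Guarded Y q
  | .seq p q => Guarded Y p ∧ (IsAct p ∨ Guarded Y q)
  | .gc _ p => Guarded Y p
  | .se _ p => Guarded Y p
  | .par p q => Guarded Y p ∧ Guarded Y q
  | .lm p q => Guarded Y p ∧ Guarded Y q
  | .cm p q => Guarded Y p ∧ Guarded Y q
  | .encap _ p => Guarded Y p
  | .pvar X => X ≠ Y
  | .rcn _ _ _ => True

open Classical in
/-- ⟨u|E⟩: replace each variable of `V` in `u` by the corresponding constant
⟨Y|E⟩ of the recursive specification E given by `V` and `t`. -/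
noncomputable def substRec (V : ℕ → Prop) (t : ℕ → RT α Act) : RT α Act → RT α Act
  | .act a => .act a
  | .delta => .delta
  | .nex => .nex
  | .alt p q => .alt (substRec V t p) (substRec V t q)
  | .seq p q => .seq (substRec V t p) (substRec V t q)
  | .gc φ p => .gc φ (substRec V t p)
  | .se φ p => .se φ (substRec V t p)
  | .par p q => .par (substRec V t p) (substRec V t q)
  | .lm p q => .lm (substRec V t p) (substRec V t q)
  | .cm p q => .cm (substRec V t p) (substRec V t q)
  | .encap H p => .encap H (substRec V t p)
  | .pvar X => if V X then .rcn V t X else .pvar X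
  | .rcn W u Y => .rcn W u Y

open Classical in
/-- Replace each variable `Y ∈ V` in the term by the process term `p Y`. -/
noncomputable def substF (V : ℕ → Prop) (p : ℕ → RT α Act) : RT α Act → RT α Act
  | .act a => .act a
  | .delta => .delta
  | .nex => .nex
  | .alt u v => .alt (substF V p u) (substF V p v)
  | .seq u v => .seq (substF V p u) (substF V p v)
  | .gc φ u => .gc φ (substF V p u)
  | .se φ u => .se φ (substF V p u)
  | .par u v => .par (substF V p u) (substF V p v)
  | .lm u v => .lm (substF V p u) (substF V p v)
  | .cm u v => .cm (substF V p u) (substF V p v)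
  | .encap H u => .encap H (substF V p u)
  | .pvar X => if V X then p X else .pvar X
  | .rcn W u Y => .rcn W u Y


/-- Derivable equality from the axioms of ctACPps, on open ctACPps+REC terms
(used in the definition of guardedness of recursive specifications). -/
inductive RDerivA (γ : Option Act → Option Act → Option Act) :
    RT α Act → RT α Act → Prop
  | refl (p : RT α Act) : RDerivA γ p p
  | symm {p q} : RDerivA γ p q → RDerivA γ q p
  | trans {p q r} : RDerivA γ p q → RDerivA γ q r → RDerivA γ p r
  | altC {p q p' q'} : RDerivA γ p q → RDerivA γ p' q' → RDerivA γ (.alt p p') (.alt q q')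
  | seqC {p q p' q'} : RDerivA γ p q → RDerivA γ p' q' → RDerivA γ (.seq p p') (.seq q q')
  | gcC {φ ψ p q} : PropEq φ ψ → RDerivA γ p q → RDerivA γ (.gc φ p) (.gc ψ q)
  | seC {φ ψ p q} : PropEq φ ψ → RDerivA γ p q → RDerivA γ (.se φ p) (.se ψ q)
  | parC {p q p' q'} : RDerivA γ p q → RDerivA γ p' q' → RDerivA γ (.par p p') (.par q q')
  | lmC {p q p' q'} : RDerivA γ p q → RDerivA γ p' q' → RDerivA γ (.lm p p') (.lm q q')
  | cmC {p q p' q'} : RDerivA γ p q → RDerivA γ p' q' → RDerivA γ (.cm p p') (.cm q q')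
  | encapC (H : Set Act) {p q} : RDerivA γ p q → RDerivA γ (.encap H p) (.encap H q)
  | A1 (x y : RT α Act) : RDerivA γ (.alt x y) (.alt y x)
  | A2 (x y z : RT α Act) : RDerivA γ (.alt (.alt x y) z) (.alt x (.alt y z))
  | A3 (x : RT α Act) : RDerivA γ (.alt x x) x
  | A4 (x y z : RT α Act) : RDerivA γ (.seq (.alt x y) z) (.alt (.seq x z) (.seq y z))
  | A5 (x y z : RT α Act) : RDerivA γ (.seq (.seq x y) z) (.seq x (.seq y z))
  | A6 (x : RT α Act) : RDerivA γ (.alt x .delta) x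
  | A7 (x : RT α Act) : RDerivA γ (.seq .delta x) .delta
  | NE1 (x : RT α Act) : RDerivA γ (.alt x .nex) .nex
  | NE2 (x : RT α Act) : RDerivA γ (.seq .nex x) .nex
  | NE3 (a : Option Act) : RDerivA γ (.seq (actd a) .nex) (.delta : RT α Act)
  | GC1 (x : RT α Act) : RDerivA γ (.gc Fml.top x) x
  | GC2 (x : RT α Act) : RDerivA γ (.gc .bot x) .delta
  | GC3 (φ : Fml α) : RDerivA γ (.gc φ .delta) (.delta : RT α Act)
  | GC4 (φ : Fml α) (x y : RT α Act) :
      RDerivA γ (.gc φ (.alt x y)) (.alt (.gc φ x) (.gc φ y))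
  | GC5 (φ : Fml α) (x y : RT α Act) : RDerivA γ (.gc φ (.seq x y)) (.seq (.gc φ x) y)
  | GC6 (φ ψ : Fml α) (x : RT α Act) : RDerivA γ (.gc φ (.gc ψ x)) (.gc (φ.conj ψ) x)
  | GC7 (φ ψ : Fml α) (x : RT α Act) :
      RDerivA γ (.gc (φ.disj ψ) x) (.alt (.gc φ x) (.gc ψ x))
  | SE1 (x : RT α Act) : RDerivA γ (.se Fml.top x) x
  | SE2 (x : RT α Act) : RDerivA γ (.se .bot x) .nex
  | SE3 (φ : Fml α) : RDerivA γ (.se φ .nex) (.nex : RT α Act)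
  | SE4 (φ : Fml α) (x y : RT α Act) : RDerivA γ (.alt (.se φ x) y) (.se φ (.alt x y))
  | SE5 (φ : Fml α) (x y : RT α Act) : RDerivA γ (.seq (.se φ x) y) (.se φ (.seq x y))
  | SE6 (φ ψ : Fml α) (x : RT α Act) : RDerivA γ (.se φ (.se ψ x)) (.se (φ.conj ψ) x)
  | SE7 (φ : Fml α) (x : RT α Act) : RDerivA γ (.se φ (.gc φ x)) (.se φ x)
  | SE8 (φ ψ : Fml α) (x : RT α Act) :
      RDerivA γ (.gc φ (.se ψ x)) (.se (φ.imp ψ) (.gc φ x))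
  | CM1 (x y : RT α Act) :
      RDerivA γ (.par x y) (.alt (.alt (.lm x y) (.lm y x)) (.cm x y))
  | CM2S (a : Option Act) (x : RT α Act) :
      RDerivA γ (.lm (actd a) x) (.alt (.seq (actd a) x) (.encap Set.univ x))
  | CM3S (a : Option Act) (x y : RT α Act) :
      RDerivA γ (.lm (.seq (actd a) x) y)
        (.alt (.seq (actd a) (.par x y)) (.encap Set.univ y))
  | CM4 (x y z : RT α Act) : RDerivA γ (.lm (.alt x y) z) (.alt (.lm x z) (.lm y z))
  | CM5 (a b : Option Act) (x : RT α Act) :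
      RDerivA γ (.cm (.seq (actd a) x) (actd b)) (.seq (actd (γ a b)) x)
  | CM6 (a b : Option Act) (x : RT α Act) :
      RDerivA γ (.cm (actd a) (.seq (actd b) x)) (.seq (actd (γ a b)) x)
  | CM7 (a b : Option Act) (x y : RT α Act) :
      RDerivA γ (.cm (.seq (actd a) x) (.seq (actd b) y)) (.seq (actd (γ a b)) (.par x y))
  | CM8 (x y z : RT α Act) : RDerivA γ (.cm (.alt x y) z) (.alt (.cm x z) (.cm y z))
  | CM9 (x y z : RT α Act) : RDerivA γ (.cm x (.alt y z)) (.alt (.cm x y) (.cm x z))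
  | CF (a b : Option Act) : RDerivA γ (.cm (actd a) (actd b)) (actd (γ a b) : RT α Act)
  | C1 (a b : Option Act) :
      RDerivA γ (.cm (actd a) (actd b)) (.cm (actd b) (actd a) : RT α Act)
  | C2 (a b c : Option Act) :
      RDerivA γ (.cm (.cm (actd a) (actd b)) (actd c))
        (.cm (actd a) (.cm (actd b) (actd c)) : RT α Act)
  | C3 (a : Option Act) : RDerivA γ (.cm .delta (actd a)) (.delta : RT α Act)
  | D1 (H : Set Act) (a : Act) : a ∉ H → RDerivA γ (.encap H (.act a)) (.act a)
  | D1d (H : Set Act) : RDerivA γ (.encap H (.delta : RT α Act)) .delta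
  | D2 (H : Set Act) (a : Act) : a ∈ H → RDerivA γ (.encap H (.act a)) .delta
  | D3 (H : Set Act) (x y : RT α Act) :
      RDerivA γ (.encap H (.alt x y)) (.alt (.encap H x) (.encap H y))
  | D4 (H : Set Act) (x y : RT α Act) :
      RDerivA γ (.encap H (.seq x y)) (.seq (.encap H x) (.encap H y))
  | GC8S (φ : Fml α) (x y : RT α Act) :
      RDerivA γ (.lm (.gc φ x) y) (.alt (.gc φ (.lm x y)) (.encap Set.univ y))
  | GC9S (φ : Fml α) (x y : RT α Act) :
      RDerivA γ (.cm (.gc φ x) y) (.alt (.gc φ (.cm x y)) (.encap Set.univ y))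
  | GC10S (φ : Fml α) (x y : RT α Act) :
      RDerivA γ (.cm x (.gc φ y)) (.alt (.gc φ (.cm x y)) (.encap Set.univ x))
  | GC11 (H : Set Act) (φ : Fml α) (x : RT α Act) :
      RDerivA γ (.encap H (.gc φ x)) (.gc φ (.encap H x))
  | SE9 (φ : Fml α) (x y : RT α Act) : RDerivA γ (.lm (.se φ x) y) (.se φ (.lm x y))
  | SE10 (φ : Fml α) (x y : RT α Act) : RDerivA γ (.cm (.se φ x) y) (.se φ (.cm x y))
  | SE11 (φ : Fml α) (x y : RT α Act) : RDerivA γ (.cm x (.se φ y)) (.se φ (.cm x y))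
  | SE12 (H : Set Act) (φ : Fml α) (x : RT α Act) :
      RDerivA γ (.encap H (.se φ x)) (.se φ (.encap H x))

/-- Rewriting of (open) terms using the axioms of ctACPps in either direction
and/or the equations of the recursive specification from left to right. -/
inductive Rw (γ : Option Act → Option Act → Option Act)
    (V : ℕ → Prop) (t : ℕ → RT α Act) : RT α Act → RT α Act → Prop
  | ax {p q} : RDerivA γ p q → Rw γ V t p q
  | unfold {X} : V X → Rw γ V t (.pvar X) (t X)
  | refl (p : RT α Act) : Rw γ V t p p
  | trans {p q r} : Rw γ V t p q → Rw γ V t q r → Rw γ V t p r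
  | altC {p q p' q'} : Rw γ V t p q → Rw γ V t p' q' → Rw γ V t (.alt p p') (.alt q q')
  | seqC {p q p' q'} : Rw γ V t p q → Rw γ V t p' q' → Rw γ V t (.seq p p') (.seq q q')
  | gcC (φ : Fml α) {p q} : Rw γ V t p q → Rw γ V t (.gc φ p) (.gc φ q)
  | seC (φ : Fml α) {p q} : Rw γ V t p q → Rw γ V t (.se φ p) (.se φ q)
  | parC {p q p' q'} : Rw γ V t p q → Rw γ V t p' q' → Rw γ V t (.par p p') (.par q q')
  | lmC {p q p' q'} : Rw γ V t p q → Rw γ V t p' q' → Rw γ V t (.lm p p') (.lm q q')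
  | cmC {p q p' q'} : Rw γ V t p q → Rw γ V t p' q' → Rw γ V t (.cm p p') (.cm q q')
  | encapC (H : Set Act) {p q} : Rw γ V t p q → Rw γ V t (.encap H p) (.encap H q)

/-- The recursive specification given by `V` and `t` is guarded: it can be
rewritten (using the axioms of ctACPps in either direction and/or its own
equations from left to right) to a recursive specification in which all
occurrences of variables of `V` in the right-hand sides are guarded. -/
def GuardedSpecR (γ : Option Act → Option Act → Option Act)
    (V : ℕ → Prop) (t : ℕ → RT α Act) : Prop :=
  ∃ t' : ℕ → RT α Act,
    (∀ X, V X → Rw γ V t (t X) (t' X) ∧ Plain (t' X) ∧ VarsIn V (t' X)) ∧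
    (∀ X, V X → ∀ Y, V Y → Guarded Y (t' X))

/-- The pair `(V, t)` is a guarded recursive specification over ctACPps:
the right-hand sides are ctACPps terms with variables from `V`, and the
specification is guarded. -/
def WFSpecR (γ : Option Act → Option Act → Option Act)
    (V : ℕ → Prop) (t : ℕ → RT α Act) : Prop :=
  (∀ X, V X → Plain (t X) ∧ VarsIn V (t X)) ∧ GuardedSpecR γ V t

/-- Every recursion constant occurring in the term comes from a guarded
recursive specification. -/
def WT (γ : Option Act → Option Act → Option Act) : RT α Act → Prop
  | .act _ => True
  | .delta => True
  | .nex => True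
  | .alt p q => WT γ p ∧ WT γ q
  | .seq p q => WT γ p ∧ WT γ q
  | .gc _ p => WT γ p
  | .se _ p => WT γ p
  | .par p q => WT γ p ∧ WT γ q
  | .lm p q => WT γ p ∧ WT γ q
  | .cm p q => WT γ p ∧ WT γ q
  | .encap _ p => WT γ p
  | .pvar _ => True
  | .rcn V t X => V X ∧ WFSpecR γ V t


/-- The signal relation: `RSig γ p φ` holds iff φ is the signal emitted by `p`
according to the signal rules, ⟨X|E⟩ having exactly the signal of ⟨t_X|E⟩. -/
inductive RSig (γ : Option Act → Option Act → Option Act) :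
    RT α Act → Fml α → Prop
  | act (a : Act) : RSig γ (.act a) Fml.top
  | delta : RSig γ (.delta : RT α Act) Fml.top
  | nex : RSig γ (.nex : RT α Act) .bot
  | alt {p q φ ψ} : RSig γ p φ → RSig γ q ψ → RSig γ (.alt p q) (φ.conj ψ)
  | seq {p φ} (q : RT α Act) : RSig γ p φ → RSig γ (.seq p q) φ
  | gc {p φ} (ψ : Fml α) : RSig γ p φ → RSig γ (.gc ψ p) (ψ.imp φ)
  | se {p φ} (ψ : Fml α) : RSig γ p φ → RSig γ (.se ψ p) (ψ.conj φ)
  | par {p q φ ψ} : RSig γ p φ → RSig γ q ψ → RSig γ (.par p q) (φ.conj ψ)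
  | lm {p q φ ψ} : RSig γ p φ → RSig γ q ψ → RSig γ (.lm p q) (φ.conj ψ)
  | cm {p q φ ψ} : RSig γ p φ → RSig γ q ψ → RSig γ (.cm p q) (φ.conj ψ)
  | encap {p φ} (H : Set Act) : RSig γ p φ → RSig γ (.encap H p) φ
  | recR {V : ℕ → Prop} {t : ℕ → RT α Act} {X : ℕ} {φ} :
      WFSpecR γ V t → V X →
      RSig γ (substRec V t (t X)) φ → RSig γ (.rcn V t X) φ

/-- The term emits a signal that is not logically equivalent to ⊥. -/
def SigOK (γ : Option Act → Option Act → Option Act) (p : RT α Act) : Prop :=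
  ∃ χ, RSig γ p χ ∧ ¬ EqBot χ


inductive RTr (γ : Option Act → Option Act → Option Act) :
    RT α Act → Fml α → Act → Option (RT α Act) → Prop
  | act (a : Act) : RTr γ (.act a) Fml.top a none
  | altL {x φ a o} (y : RT α Act) :
      RTr γ x φ a o → SigOK γ ((RT.alt x y)) → RTr γ (.alt x y) φ a o
  | altR {y φ a o} (x : RT α Act) :
      RTr γ y φ a o → SigOK γ ((RT.alt x y)) → RTr γ (.alt x y) φ a o
  | seqT {x φ a} (y : RT α Act) :
      RTr γ x φ a none → SigOK γ (y) → RTr γ (.seq x y) φ a (some y)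
  | seqS {x φ a x'} (y : RT α Act) :
      RTr γ x φ a (some x') → RTr γ (.seq x y) φ a (some (.seq x' y))
  | gcR {x φ a o} (ψ : Fml α) :
      RTr γ x φ a o → ¬ EqBot (φ.conj ψ) → RTr γ (.gc ψ x) (φ.conj ψ) a o
  | seR {x φ a o} (ψ : Fml α) :
      RTr γ x φ a o → SigOK γ ((RT.se ψ x)) → RTr γ (.se ψ x) φ a o
  | parTL {x φ a} (y : RT α Act) :
      RTr γ x φ a none → SigOK γ ((RT.par x y)) → SigOK γ (y) →
      RTr γ (.par x y) φ a (some y)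
  | parTR (x : RT α Act) {y φ a} :
      RTr γ y φ a none → SigOK γ ((RT.par x y)) → SigOK γ (x) →
      RTr γ (.par x y) φ a (some x)
  | parSL {x φ a x'} (y : RT α Act) :
      RTr γ x φ a (some x') → SigOK γ ((RT.par x y)) →
      SigOK γ ((RT.par x' y)) → RTr γ (.par x y) φ a (some (.par x' y))
  | parSR (x : RT α Act) {y φ a y'} :
      RTr γ y φ a (some y') → SigOK γ ((RT.par x y)) →
      SigOK γ ((RT.par x y')) → RTr γ (.par x y) φ a (some (.par x y'))
  | parCTT {x y : RT α Act} {φ ψ a b c} :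
      RTr γ x φ a none → RTr γ y ψ b none → γ (some a) (some b) = some c →
      ¬ EqBot (φ.conj ψ) → SigOK γ ((RT.par x y)) →
      RTr γ (.par x y) (φ.conj ψ) c none
  | parCTS {x y : RT α Act} {φ ψ a b c y'} :
      RTr γ x φ a none → RTr γ y ψ b (some y') → γ (some a) (some b) = some c →
      ¬ EqBot (φ.conj ψ) → SigOK γ ((RT.par x y)) →
      RTr γ (.par x y) (φ.conj ψ) c (some y')
  | parCST {x y : RT α Act} {φ ψ a b c x'} :
      RTr γ x φ a (some x') → RTr γ y ψ b none → γ (some a) (some b) = some c →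
      ¬ EqBot (φ.conj ψ) → SigOK γ ((RT.par x y)) →
      RTr γ (.par x y) (φ.conj ψ) c (some x')
  | parCSS {x y : RT α Act} {φ ψ a b c x' y'} :
      RTr γ x φ a (some x') → RTr γ y ψ b (some y') → γ (some a) (some b) = some c →
      ¬ EqBot (φ.conj ψ) → SigOK γ ((RT.par x y)) →
      SigOK γ ((RT.par x' y')) →
      RTr γ (.par x y) (φ.conj ψ) c (some (.par x' y'))
  | lmT {x φ a} (y : RT α Act) :
      RTr γ x φ a none → SigOK γ ((RT.lm x y)) → SigOK γ (y) →
      RTr γ (.lm x y) φ a (some y)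
  | lmS {x φ a x'} (y : RT α Act) :
      RTr γ x φ a (some x') → SigOK γ ((RT.lm x y)) →
      SigOK γ ((RT.par x' y)) → RTr γ (.lm x y) φ a (some (.par x' y))
  | cmTT {x y : RT α Act} {φ ψ a b c} :
      RTr γ x φ a none → RTr γ y ψ b none → γ (some a) (some b) = some c →
      ¬ EqBot (φ.conj ψ) → SigOK γ ((RT.cm x y)) →
      RTr γ (.cm x y) (φ.conj ψ) c none
  | cmTS {x y : RT α Act} {φ ψ a b c y'} :
      RTr γ x φ a none → RTr γ y ψ b (some y') → γ (some a) (some b) = some c →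
      ¬ EqBot (φ.conj ψ) → SigOK γ ((RT.cm x y)) →
      RTr γ (.cm x y) (φ.conj ψ) c (some y')
  | cmST {x y : RT α Act} {φ ψ a b c x'} :
      RTr γ x φ a (some x') → RTr γ y ψ b none → γ (some a) (some b) = some c →
      ¬ EqBot (φ.conj ψ) → SigOK γ ((RT.cm x y)) →
      RTr γ (.cm x y) (φ.conj ψ) c (some x')
  | cmSS {x y : RT α Act} {φ ψ a b c x' y'} :
      RTr γ x φ a (some x') → RTr γ y ψ b (some y') → γ (some a) (some b) = some c →
      ¬ EqBot (φ.conj ψ) → SigOK γ ((RT.cm x y)) →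
      SigOK γ ((RT.par x' y')) →
      RTr γ (.cm x y) (φ.conj ψ) c (some (.par x' y'))
  | encapR {x φ a o} (H : Set Act) :
      RTr γ x φ a o → a ∉ H → RTr γ (.encap H x) φ a (Option.map (RT.encap H) o)
  | recR {V : ℕ → Prop} {t : ℕ → RT α Act} {X : ℕ} {φ a o} :
      WFSpecR γ V t → V X →
      RTr γ (substRec V t (t X)) φ a o → RTr γ (.rcn V t X) φ a o


/-- Derivable equality from the axioms of ctACPps+REC: the axioms of ctACPps
together with RDP and RSP for guarded recursive specifications. -/
inductive RDeriv (γ : Option Act → Option Act → Option Act) :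
    RT α Act → RT α Act → Prop
  | refl (p : RT α Act) : RDeriv γ p p
  | symm {p q} : RDeriv γ p q → RDeriv γ q p
  | trans {p q r} : RDeriv γ p q → RDeriv γ q r → RDeriv γ p r
  | altC {p q p' q'} : RDeriv γ p q → RDeriv γ p' q' → RDeriv γ (.alt p p') (.alt q q')
  | seqC {p q p' q'} : RDeriv γ p q → RDeriv γ p' q' → RDeriv γ (.seq p p') (.seq q q')
  | gcC {φ ψ p q} : PropEq φ ψ → RDeriv γ p q → RDeriv γ (.gc φ p) (.gc ψ q)
  | seC {φ ψ p q} : PropEq φ ψ → RDeriv γ p q → RDeriv γ (.se φ p) (.se ψ q)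
  | parC {p q p' q'} : RDeriv γ p q → RDeriv γ p' q' → RDeriv γ (.par p p') (.par q q')
  | lmC {p q p' q'} : RDeriv γ p q → RDeriv γ p' q' → RDeriv γ (.lm p p') (.lm q q')
  | cmC {p q p' q'} : RDeriv γ p q → RDeriv γ p' q' → RDeriv γ (.cm p p') (.cm q q')
  | encapC (H : Set Act) {p q} : RDeriv γ p q → RDeriv γ (.encap H p) (.encap H q)
  | A1 (x y : RT α Act) : RDeriv γ (.alt x y) (.alt y x)
  | A2 (x y z : RT α Act) : RDeriv γ (.alt (.alt x y) z) (.alt x (.alt y z))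
  | A3 (x : RT α Act) : RDeriv γ (.alt x x) x
  | A4 (x y z : RT α Act) : RDeriv γ (.seq (.alt x y) z) (.alt (.seq x z) (.seq y z))
  | A5 (x y z : RT α Act) : RDeriv γ (.seq (.seq x y) z) (.seq x (.seq y z))
  | A6 (x : RT α Act) : RDeriv γ (.alt x .delta) x
  | A7 (x : RT α Act) : RDeriv γ (.seq .delta x) .delta
  | NE1 (x : RT α Act) : RDeriv γ (.alt x .nex) .nex
  | NE2 (x : RT α Act) : RDeriv γ (.seq .nex x) .nex
  | NE3 (a : Option Act) : RDeriv γ (.seq (actd a) .nex) (.delta : RT α Act)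
  | GC1 (x : RT α Act) : RDeriv γ (.gc Fml.top x) x
  | GC2 (x : RT α Act) : RDeriv γ (.gc .bot x) .delta
  | GC3 (φ : Fml α) : RDeriv γ (.gc φ .delta) (.delta : RT α Act)
  | GC4 (φ : Fml α) (x y : RT α Act) :
      RDeriv γ (.gc φ (.alt x y)) (.alt (.gc φ x) (.gc φ y))
  | GC5 (φ : Fml α) (x y : RT α Act) : RDeriv γ (.gc φ (.seq x y)) (.seq (.gc φ x) y)
  | GC6 (φ ψ : Fml α) (x : RT α Act) : RDeriv γ (.gc φ (.gc ψ x)) (.gc (φ.conj ψ) x)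
  | GC7 (φ ψ : Fml α) (x : RT α Act) :
      RDeriv γ (.gc (φ.disj ψ) x) (.alt (.gc φ x) (.gc ψ x))
  | SE1 (x : RT α Act) : RDeriv γ (.se Fml.top x) x
  | SE2 (x : RT α Act) : RDeriv γ (.se .bot x) .nex
  | SE3 (φ : Fml α) : RDeriv γ (.se φ .nex) (.nex : RT α Act)
  | SE4 (φ : Fml α) (x y : RT α Act) : RDeriv γ (.alt (.se φ x) y) (.se φ (.alt x y))
  | SE5 (φ : Fml α) (x y : RT α Act) : RDeriv γ (.seq (.se φ x) y) (.se φ (.seq x y))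
  | SE6 (φ ψ : Fml α) (x : RT α Act) : RDeriv γ (.se φ (.se ψ x)) (.se (φ.conj ψ) x)
  | SE7 (φ : Fml α) (x : RT α Act) : RDeriv γ (.se φ (.gc φ x)) (.se φ x)
  | SE8 (φ ψ : Fml α) (x : RT α Act) :
      RDeriv γ (.gc φ (.se ψ x)) (.se (φ.imp ψ) (.gc φ x))
  | CM1 (x y : RT α Act) :
      RDeriv γ (.par x y) (.alt (.alt (.lm x y) (.lm y x)) (.cm x y))
  | CM2S (a : Option Act) (x : RT α Act) :
      RDeriv γ (.lm (actd a) x) (.alt (.seq (actd a) x) (.encap Set.univ x))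
  | CM3S (a : Option Act) (x y : RT α Act) :
      RDeriv γ (.lm (.seq (actd a) x) y)
        (.alt (.seq (actd a) (.par x y)) (.encap Set.univ y))
  | CM4 (x y z : RT α Act) : RDeriv γ (.lm (.alt x y) z) (.alt (.lm x z) (.lm y z))
  | CM5 (a b : Option Act) (x : RT α Act) :
      RDeriv γ (.cm (.seq (actd a) x) (actd b)) (.seq (actd (γ a b)) x)
  | CM6 (a b : Option Act) (x : RT α Act) :
      RDeriv γ (.cm (actd a) (.seq (actd b) x)) (.seq (actd (γ a b)) x)
  | CM7 (a b : Option Act) (x y : RT α Act) :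
      RDeriv γ (.cm (.seq (actd a) x) (.seq (actd b) y)) (.seq (actd (γ a b)) (.par x y))
  | CM8 (x y z : RT α Act) : RDeriv γ (.cm (.alt x y) z) (.alt (.cm x z) (.cm y z))
  | CM9 (x y z : RT α Act) : RDeriv γ (.cm x (.alt y z)) (.alt (.cm x y) (.cm x z))
  | CF (a b : Option Act) : RDeriv γ (.cm (actd a) (actd b)) (actd (γ a b) : RT α Act)
  | C1 (a b : Option Act) :
      RDeriv γ (.cm (actd a) (actd b)) (.cm (actd b) (actd a) : RT α Act)
  | C2 (a b c : Option Act) :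
      RDeriv γ (.cm (.cm (actd a) (actd b)) (actd c))
        (.cm (actd a) (.cm (actd b) (actd c)) : RT α Act)
  | C3 (a : Option Act) : RDeriv γ (.cm .delta (actd a)) (.delta : RT α Act)
  | D1 (H : Set Act) (a : Act) : a ∉ H → RDeriv γ (.encap H (.act a)) (.act a)
  | D1d (H : Set Act) : RDeriv γ (.encap H (.delta : RT α Act)) .delta
  | D2 (H : Set Act) (a : Act) : a ∈ H → RDeriv γ (.encap H (.act a)) .delta
  | D3 (H : Set Act) (x y : RT α Act) :
      RDeriv γ (.encap H (.alt x y)) (.alt (.encap H x) (.encap H y))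
  | D4 (H : Set Act) (x y : RT α Act) :
      RDeriv γ (.encap H (.seq x y)) (.seq (.encap H x) (.encap H y))
  | GC8S (φ : Fml α) (x y : RT α Act) :
      RDeriv γ (.lm (.gc φ x) y) (.alt (.gc φ (.lm x y)) (.encap Set.univ y))
  | GC9S (φ : Fml α) (x y : RT α Act) :
      RDeriv γ (.cm (.gc φ x) y) (.alt (.gc φ (.cm x y)) (.encap Set.univ y))
  | GC10S (φ : Fml α) (x y : RT α Act) :
      RDeriv γ (.cm x (.gc φ y)) (.alt (.gc φ (.cm x y)) (.encap Set.univ x))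
  | GC11 (H : Set Act) (φ : Fml α) (x : RT α Act) :
      RDeriv γ (.encap H (.gc φ x)) (.gc φ (.encap H x))
  | SE9 (φ : Fml α) (x y : RT α Act) : RDeriv γ (.lm (.se φ x) y) (.se φ (.lm x y))
  | SE10 (φ : Fml α) (x y : RT α Act) : RDeriv γ (.cm (.se φ x) y) (.se φ (.cm x y))
  | SE11 (φ : Fml α) (x y : RT α Act) : RDeriv γ (.cm x (.se φ y)) (.se φ (.cm x y))
  | SE12 (H : Set Act) (φ : Fml α) (x : RT α Act) :
      RDeriv γ (.encap H (.se φ x)) (.se φ (.encap H x))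
  | rdp {V : ℕ → Prop} {t : ℕ → RT α Act} {X : ℕ} :
      WFSpecR γ V t → V X →
      RDeriv γ (.rcn V t X) (substRec V t (t X))
  | rsp {V : ℕ → Prop} {t : ℕ → RT α Act} {p : ℕ → RT α Act} {X : ℕ} :
      WFSpecR γ V t →
      (∀ Y, V Y → Closed (p Y)) →
      (∀ Y, V Y → RDeriv γ (p Y) (substF V p (t Y))) →
      V X →
      RDeriv γ (p X) (.rcn V t X)

/-- Lift a relation on process terms to their optional (√-extended) targets. -/
def ROptR (R : RT α Act → RT α Act → Prop) :
    Option (RT α Act) → Option (RT α Act) → Prop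
  | none, none => True
  | some p, some q => R p q
  | _, _ => False

/-- The (one-directional) simulation conditions of a splitting bisimulation. -/
def RSim (γ : Option Act → Option Act → Option Act)
    (R : RT α Act → RT α Act → Prop) (p q : RT α Act) : Prop :=
  (∀ φ a o, RTr γ p φ a o →
    ∀ χ, RSig γ p χ → ∀ σ : α → V3, eval σ χ ≠ V3.f → eval σ φ ≠ V3.f →
      ∃ ψ o', eval σ ψ = eval σ φ ∧ RTr γ q ψ a o' ∧ ROptR R o o') ∧
  (∀ χ, RSig γ p χ → ∃ χ', RSig γ q χ' ∧ FEquiv χ χ')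

/-- `R` is a bisimulation. -/
def RIsBisim (γ : Option Act → Option Act → Option Act)
    (R : RT α Act → RT α Act → Prop) : Prop :=
  ∀ p q, R p q → RSim γ R p q ∧ RSim γ (fun u v => R v u) q p

/-- Bisimulation equivalence. -/
def RBisim (γ : Option Act → Option Act → Option Act) (p q : RT α Act) : Prop :=
  ∃ R, RIsBisim γ R ∧ R p q

end

section CongrAux

variable {α Act : Type} {γ : Option Act → Option Act → Option Act}

lemma conjT_ne_f {x y : V3} : conjT x y ≠ V3.f ↔ (x ≠ V3.f ∧ y ≠ V3.f) := by
  cases x <;> cases y <;> simp [conjT]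

lemma impT_ne {x y : V3} (hx : x ≠ V3.f) : impT x y = y := by
  cases x <;> simp_all [impT]

lemma not_eqBot_of_feq {χ χ' : Fml α} (h : FEquiv χ χ') (hb : ¬ EqBot χ) :
    ¬ EqBot χ' := fun hb' => hb (fun σ => (h σ).trans (hb' σ))

lemma roptr_none {R : RT α Act → RT α Act → Prop} {o} (h : ROptR R none o) :
    o = none := by cases o with | none => rfl | some x => exact h.elim

lemma roptr_some {R : RT α Act → RT α Act → Prop} {x o} (h : ROptR R (some x) o) :
    ∃ y, o = some y ∧ R x y := by
  cases o with | none => exact h.elim | some y => exact ⟨y, rfl, h⟩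

lemma ROptR_mono {R S : RT α Act → RT α Act → Prop} (h : ∀ x y, R x y → S x y)
    (o o' : Option (RT α Act)) (ho : ROptR R o o') : ROptR S o o' := by
  cases o <;> cases o' <;> simp_all [ROptR]

lemma RSim_mono {R S : RT α Act → RT α Act → Prop} {p q : RT α Act}
    (h : ∀ x y, R x y → S x y) (hs : RSim γ R p q) : RSim γ S p q := by
  refine ⟨?_, hs.2⟩
  intro φ a o htr χ hχ σ h1 h2
  obtain ⟨ψ, o', he, ht, ho⟩ := hs.1 φ a o htr χ hχ σ h1 h2
  exact ⟨ψ, o', he, ht, ROptR_mono h o o' ho⟩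

lemma RBisim_symm {p q : RT α Act} (h : RBisim γ p q) : RBisim γ q p := by
  obtain ⟨R, hR, hr⟩ := h
  refine ⟨fun u v => R v u, fun u v huv => ⟨(hR v u huv).2, ?_⟩, hr⟩
  exact RSim_mono (fun x y hxy => hxy) (hR v u huv).1

/-- Congruence closure of bisimulation equivalence. -/
inductive C (γ : Option Act → Option Act → Option Act) : RT α Act → RT α Act → Prop
  | base {u v} : RBisim γ u v → C γ u v
  | altc {u v u' v'} : C γ u v → C γ u' v' → C γ (.alt u u') (.alt v v')
  | seqc {u v u' v'} : C γ u v → C γ u' v' → C γ (.seq u u') (.seq v v')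
  | gcc (φ : Fml α) {u v} : C γ u v → C γ (.gc φ u) (.gc φ v)
  | sec (φ : Fml α) {u v} : C γ u v → C γ (.se φ u) (.se φ v)
  | parc {u v u' v'} : C γ u v → C γ u' v' → C γ (.par u u') (.par v v')
  | lmc {u v u' v'} : C γ u v → C γ u' v' → C γ (.lm u u') (.lm v v')
  | cmc {u v u' v'} : C γ u v → C γ u' v' → C γ (.cm u u') (.cm v v')
  | encapc (H : Set Act) {u v} : C γ u v → C γ (.encap H u) (.encap H v)

lemma C_symm {u v : RT α Act} (h : C γ u v) : C γ v u := by
  induction h with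
  | base h => exact C.base (RBisim_symm h)
  | altc _ _ ih ih' => exact C.altc ih ih'
  | seqc _ _ ih ih' => exact C.seqc ih ih'
  | gcc φ _ ih => exact C.gcc φ ih
  | sec φ _ ih => exact C.sec φ ih
  | parc _ _ ih ih' => exact C.parc ih ih'
  | lmc _ _ ih ih' => exact C.lmc ih ih'
  | cmc _ _ ih ih' => exact C.cmc ih ih'
  | encapc H _ ih => exact C.encapc H ih

lemma sigC {u v : RT α Act} (h : C γ u v) :
    ∀ χ, RSig γ u χ → ∃ χ', RSig γ v χ' ∧ FEquiv χ χ' := by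
  induction h with
  | base h =>
    obtain ⟨R, hR, hr⟩ := h
    exact (hR _ _ hr).1.2
  | altc _ _ ih ih' =>
    intro χ hχ
    cases hχ with
    | alt h1 h2 =>
      obtain ⟨χ1', hs1, fe1⟩ := ih _ h1
      obtain ⟨χ2', hs2, fe2⟩ := ih' _ h2
      exact ⟨_, RSig.alt hs1 hs2, fun σ => by simp [eval, fe1 σ, fe2 σ]⟩
  | seqc _ _ ih ih' =>
    intro χ hχ
    cases hχ with
    | seq q h1 =>
      obtain ⟨χ', hs, fe⟩ := ih _ h1
      exact ⟨χ', RSig.seq _ hs, fe⟩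
  | gcc φ _ ih =>
    intro χ hχ
    cases hχ with
    | gc ψ h1 =>
      obtain ⟨χ', hs, fe⟩ := ih _ h1
      exact ⟨_, RSig.gc φ hs, fun σ => by simp [eval, fe σ]⟩
  | sec φ _ ih =>
    intro χ hχ
    cases hχ with
    | se ψ h1 =>
      obtain ⟨χ', hs, fe⟩ := ih _ h1
      exact ⟨_, RSig.se φ hs, fun σ => by simp [eval, fe σ]⟩
  | parc _ _ ih ih' =>
    intro χ hχ
    cases hχ with
    | par h1 h2 =>
      obtain ⟨χ1', hs1, fe1⟩ := ih _ h1
      obtain ⟨χ2', hs2, fe2⟩ := ih' _ h2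
      exact ⟨_, RSig.par hs1 hs2, fun σ => by simp [eval, fe1 σ, fe2 σ]⟩
  | lmc _ _ ih ih' =>
    intro χ hχ
    cases hχ with
    | lm h1 h2 =>
      obtain ⟨χ1', hs1, fe1⟩ := ih _ h1
      obtain ⟨χ2', hs2, fe2⟩ := ih' _ h2
      exact ⟨_, RSig.lm hs1 hs2, fun σ => by simp [eval, fe1 σ, fe2 σ]⟩
  | cmc _ _ ih ih' =>
    intro χ hχ
    cases hχ with
    | cm h1 h2 =>
      obtain ⟨χ1', hs1, fe1⟩ := ih _ h1
      obtain ⟨χ2', hs2, fe2⟩ := ih' _ h2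
      exact ⟨_, RSig.cm hs1 hs2, fun σ => by simp [eval, fe1 σ, fe2 σ]⟩
  | encapc H _ ih =>
    intro χ hχ
    cases hχ with
    | encap H h1 =>
      obtain ⟨χ', hs, fe⟩ := ih _ h1
      exact ⟨χ', RSig.encap H hs, fe⟩

lemma sigOK_C {u v : RT α Act} (h : C γ u v) (hs : SigOK γ u) : SigOK γ v := by
  obtain ⟨χ, h1, h2⟩ := hs
  obtain ⟨χ', h1', fe⟩ := sigC h χ h1
  exact ⟨χ', h1', not_eqBot_of_feq fe h2⟩

end CongrAux
section CongrMain

variable {α Act : Type} {γ : Option Act → Option Act → Option Act}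

lemma ROptR_map_encap {o o' : Option (RT α Act)} (H : Set Act)
    (h : ROptR (C γ) o o') :
    ROptR (C γ) (Option.map (RT.encap H) o) (Option.map (RT.encap H) o') := by
  cases o with
  | none => cases o' with | none => trivial | some y => exact h.elim
  | some x => cases o' with | none => exact h.elim | some y => exact C.encapc H h

lemma simC {u v : RT α Act} (h : C γ u v) : RSim γ (C γ) u v := by
  induction h with
  | base h =>
    obtain ⟨R, hR, hr⟩ := h
    exact RSim_mono (fun x y hxy => C.base ⟨R, hR, hxy⟩) (hR _ _ hr).1
  | altc hC hC' ih ih' =>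
    refine ⟨?_, sigC (C.altc hC hC')⟩
    intro φ a o htr χ hχ σ hχf hφf
    cases hχ with
    | alt hs1 hs2 =>
      simp only [eval, ne_eq, conjT_ne_f] at hχf
      cases htr with
      | altL y h1 hs =>
        obtain ⟨ψ, o', heq, htr', ho⟩ := ih.1 φ a o h1 _ hs1 σ hχf.1 hφf
        exact ⟨ψ, o', heq, RTr.altL _ htr' (sigOK_C (C.altc hC hC') hs), ho⟩
      | altR x h1 hs =>
        obtain ⟨ψ, o', heq, htr', ho⟩ := ih'.1 φ a o h1 _ hs2 σ hχf.2 hφf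
        exact ⟨ψ, o', heq, RTr.altR _ htr' (sigOK_C (C.altc hC hC') hs), ho⟩
  | seqc hC hC' ih ih' =>
    refine ⟨?_, sigC (C.seqc hC hC')⟩
    intro φ a o htr χ hχ σ hχf hφf
    cases hχ with
    | seq q hs1 =>
      cases htr with
      | seqT y h1 hs =>
        obtain ⟨ψ, o', heq, htr', ho⟩ := ih.1 φ a none h1 _ hs1 σ hχf hφf
        obtain rfl := roptr_none ho
        exact ⟨ψ, _, heq, RTr.seqT _ htr' (sigOK_C hC' hs), hC'⟩
      | seqS y h1 =>
        obtain ⟨ψ, o', heq, htr', ho⟩ := ih.1 φ a _ h1 _ hs1 σ hχf hφf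
        obtain ⟨y', rfl, hxy⟩ := roptr_some ho
        exact ⟨ψ, _, heq, RTr.seqS _ htr', C.seqc hxy hC'⟩
  | gcc φg hC ih =>
    refine ⟨?_, sigC (C.gcc φg hC)⟩
    intro φ a o htr χ hχ σ hχf hφf
    cases hχ with
    | gc ψg hs1 =>
      cases htr with
      | gcR ψ2 h1 hnb =>
        simp only [eval, ne_eq, conjT_ne_f] at hφf
        rw [show eval σ (Fml.imp φg _) = impT (eval σ φg) _ from rfl,
          impT_ne hφf.2] at hχf
        obtain ⟨ψ, o', heq, htr', ho⟩ := ih.1 _ a o h1 _ hs1 σ hχf hφf.1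
        have hne : eval σ (ψ.conj φg) ≠ V3.f := by
          simp only [eval, ne_eq, conjT_ne_f, heq]
          exact hφf
        refine ⟨ψ.conj φg, o', ?_, RTr.gcR φg htr' (fun hb => hne (hb σ)), ho⟩
        simp [eval, heq]
  | sec φs hC ih =>
    refine ⟨?_, sigC (C.sec φs hC)⟩
    intro φ a o htr χ hχ σ hχf hφf
    cases hχ with
    | se ψs hs1 =>
      cases htr with
      | seR ψ2 h1 hs =>
        simp only [eval, ne_eq, conjT_ne_f] at hχf
        obtain ⟨ψ, o', heq, htr', ho⟩ := ih.1 φ a o h1 _ hs1 σ hχf.2 hφf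
        exact ⟨ψ, o', heq, RTr.seR φs htr' (sigOK_C (C.sec φs hC) hs), ho⟩
  | parc hC hC' ih ih' =>
    refine ⟨?_, sigC (C.parc hC hC')⟩
    intro φ a o htr χ hχ σ hχf hφf
    cases hχ with
    | par hs1 hs2 =>
      simp only [eval, ne_eq, conjT_ne_f] at hχf
      cases htr with
      | parTL y h1 hsp hsy =>
        obtain ⟨ψ, o', heq, htr', ho⟩ := ih.1 φ a none h1 _ hs1 σ hχf.1 hφf
        obtain rfl := roptr_none ho
        exact ⟨ψ, _, heq,
          RTr.parTL _ htr' (sigOK_C (C.parc hC hC') hsp) (sigOK_C hC' hsy), hC'⟩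
      | parTR x h1 hsp hsx =>
        obtain ⟨ψ, o', heq, htr', ho⟩ := ih'.1 φ a none h1 _ hs2 σ hχf.2 hφf
        obtain rfl := roptr_none ho
        exact ⟨ψ, _, heq,
          RTr.parTR _ htr' (sigOK_C (C.parc hC hC') hsp) (sigOK_C hC hsx), hC⟩
      | parSL y h1 hsp hsr =>
        obtain ⟨ψ, o', heq, htr', ho⟩ := ih.1 φ a _ h1 _ hs1 σ hχf.1 hφf
        obtain ⟨y', rfl, hxy⟩ := roptr_some ho
        exact ⟨ψ, _, heq,
          RTr.parSL _ htr' (sigOK_C (C.parc hC hC') hsp)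
            (sigOK_C (C.parc hxy hC') hsr), C.parc hxy hC'⟩
      | parSR x h1 hsp hsr =>
        obtain ⟨ψ, o', heq, htr', ho⟩ := ih'.1 φ a _ h1 _ hs2 σ hχf.2 hφf
        obtain ⟨y', rfl, hxy⟩ := roptr_some ho
        exact ⟨ψ, _, heq,
          RTr.parSR _ htr' (sigOK_C (C.parc hC hC') hsp)
            (sigOK_C (C.parc hC hxy) hsr), C.parc hC hxy⟩
      | parCTT h1 h2 hg hnb hsp =>
        simp only [eval, ne_eq, conjT_ne_f] at hφf
        obtain ⟨ψ1, o1, heq1, htr1, ho1⟩ := ih.1 _ _ none h1 _ hs1 σ hχf.1 hφf.1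
        obtain rfl := roptr_none ho1
        obtain ⟨ψ2, o2, heq2, htr2, ho2⟩ := ih'.1 _ _ none h2 _ hs2 σ hχf.2 hφf.2
        obtain rfl := roptr_none ho2
        have hne : eval σ (ψ1.conj ψ2) ≠ V3.f := by
          simp only [eval, ne_eq, conjT_ne_f, heq1, heq2]; exact hφf
        refine ⟨ψ1.conj ψ2, none, ?_,
          RTr.parCTT htr1 htr2 hg (fun hb => hne (hb σ))
            (sigOK_C (C.parc hC hC') hsp), trivial⟩
        simp [eval, heq1, heq2]
      | parCTS h1 h2 hg hnb hsp =>
        simp only [eval, ne_eq, conjT_ne_f] at hφf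
        obtain ⟨ψ1, o1, heq1, htr1, ho1⟩ := ih.1 _ _ none h1 _ hs1 σ hχf.1 hφf.1
        obtain rfl := roptr_none ho1
        obtain ⟨ψ2, o2, heq2, htr2, ho2⟩ := ih'.1 _ _ _ h2 _ hs2 σ hχf.2 hφf.2
        obtain ⟨y', rfl, hxy⟩ := roptr_some ho2
        have hne : eval σ (ψ1.conj ψ2) ≠ V3.f := by
          simp only [eval, ne_eq, conjT_ne_f, heq1, heq2]; exact hφf
        refine ⟨ψ1.conj ψ2, _, ?_,
          RTr.parCTS htr1 htr2 hg (fun hb => hne (hb σ))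
            (sigOK_C (C.parc hC hC') hsp), hxy⟩
        simp [eval, heq1, heq2]
      | parCST h1 h2 hg hnb hsp =>
        simp only [eval, ne_eq, conjT_ne_f] at hφf
        obtain ⟨ψ1, o1, heq1, htr1, ho1⟩ := ih.1 _ _ _ h1 _ hs1 σ hχf.1 hφf.1
        obtain ⟨x', rfl, hxy⟩ := roptr_some ho1
        obtain ⟨ψ2, o2, heq2, htr2, ho2⟩ := ih'.1 _ _ none h2 _ hs2 σ hχf.2 hφf.2
        obtain rfl := roptr_none ho2
        have hne : eval σ (ψ1.conj ψ2) ≠ V3.f := by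
          simp only [eval, ne_eq, conjT_ne_f, heq1, heq2]; exact hφf
        refine ⟨ψ1.conj ψ2, _, ?_,
          RTr.parCST htr1 htr2 hg (fun hb => hne (hb σ))
            (sigOK_C (C.parc hC hC') hsp), hxy⟩
        simp [eval, heq1, heq2]
      | parCSS h1 h2 hg hnb hsp hsr =>
        simp only [eval, ne_eq, conjT_ne_f] at hφf
        obtain ⟨ψ1, o1, heq1, htr1, ho1⟩ := ih.1 _ _ _ h1 _ hs1 σ hχf.1 hφf.1
        obtain ⟨x', rfl, hx⟩ := roptr_some ho1
        obtain ⟨ψ2, o2, heq2, htr2, ho2⟩ := ih'.1 _ _ _ h2 _ hs2 σ hχf.2 hφf.2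
        obtain ⟨y', rfl, hy⟩ := roptr_some ho2
        have hne : eval σ (ψ1.conj ψ2) ≠ V3.f := by
          simp only [eval, ne_eq, conjT_ne_f, heq1, heq2]; exact hφf
        refine ⟨ψ1.conj ψ2, _, ?_,
          RTr.parCSS htr1 htr2 hg (fun hb => hne (hb σ))
            (sigOK_C (C.parc hC hC') hsp)
            (sigOK_C (C.parc hx hy) hsr), C.parc hx hy⟩
        simp [eval, heq1, heq2]
  | lmc hC hC' ih ih' =>
    refine ⟨?_, sigC (C.lmc hC hC')⟩
    intro φ a o htr χ hχ σ hχf hφf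
    cases hχ with
    | lm hs1 hs2 =>
      simp only [eval, ne_eq, conjT_ne_f] at hχf
      cases htr with
      | lmT y h1 hsp hsy =>
        obtain ⟨ψ, o', heq, htr', ho⟩ := ih.1 φ a none h1 _ hs1 σ hχf.1 hφf
        obtain rfl := roptr_none ho
        exact ⟨ψ, _, heq,
          RTr.lmT _ htr' (sigOK_C (C.lmc hC hC') hsp) (sigOK_C hC' hsy), hC'⟩
      | lmS y h1 hsp hsr =>
        obtain ⟨ψ, o', heq, htr', ho⟩ := ih.1 φ a _ h1 _ hs1 σ hχf.1 hφf
        obtain ⟨y', rfl, hxy⟩ := roptr_some ho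
        exact ⟨ψ, _, heq,
          RTr.lmS _ htr' (sigOK_C (C.lmc hC hC') hsp)
            (sigOK_C (C.parc hxy hC') hsr), C.parc hxy hC'⟩
  | cmc hC hC' ih ih' =>
    refine ⟨?_, sigC (C.cmc hC hC')⟩
    intro φ a o htr χ hχ σ hχf hφf
    cases hχ with
    | cm hs1 hs2 =>
      simp only [eval, ne_eq, conjT_ne_f] at hχf
      cases htr with
      | cmTT h1 h2 hg hnb hsp =>
        simp only [eval, ne_eq, conjT_ne_f] at hφf
        obtain ⟨ψ1, o1, heq1, htr1, ho1⟩ := ih.1 _ _ none h1 _ hs1 σ hχf.1 hφf.1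
        obtain rfl := roptr_none ho1
        obtain ⟨ψ2, o2, heq2, htr2, ho2⟩ := ih'.1 _ _ none h2 _ hs2 σ hχf.2 hφf.2
        obtain rfl := roptr_none ho2
        have hne : eval σ (ψ1.conj ψ2) ≠ V3.f := by
          simp only [eval, ne_eq, conjT_ne_f, heq1, heq2]; exact hφf
        refine ⟨ψ1.conj ψ2, none, ?_,
          RTr.cmTT htr1 htr2 hg (fun hb => hne (hb σ))
            (sigOK_C (C.cmc hC hC') hsp), trivial⟩
        simp [eval, heq1, heq2]
      | cmTS h1 h2 hg hnb hsp =>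
        simp only [eval, ne_eq, conjT_ne_f] at hφf
        obtain ⟨ψ1, o1, heq1, htr1, ho1⟩ := ih.1 _ _ none h1 _ hs1 σ hχf.1 hφf.1
        obtain rfl := roptr_none ho1
        obtain ⟨ψ2, o2, heq2, htr2, ho2⟩ := ih'.1 _ _ _ h2 _ hs2 σ hχf.2 hφf.2
        obtain ⟨y', rfl, hxy⟩ := roptr_some ho2
        have hne : eval σ (ψ1.conj ψ2) ≠ V3.f := by
          simp only [eval, ne_eq, conjT_ne_f, heq1, heq2]; exact hφf
        refine ⟨ψ1.conj ψ2, _, ?_,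
          RTr.cmTS htr1 htr2 hg (fun hb => hne (hb σ))
            (sigOK_C (C.cmc hC hC') hsp), hxy⟩
        simp [eval, heq1, heq2]
      | cmST h1 h2 hg hnb hsp =>
        simp only [eval, ne_eq, conjT_ne_f] at hφf
        obtain ⟨ψ1, o1, heq1, htr1, ho1⟩ := ih.1 _ _ _ h1 _ hs1 σ hχf.1 hφf.1
        obtain ⟨x', rfl, hxy⟩ := roptr_some ho1
        obtain ⟨ψ2, o2, heq2, htr2, ho2⟩ := ih'.1 _ _ none h2 _ hs2 σ hχf.2 hφf.2
        obtain rfl := roptr_none ho2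
        have hne : eval σ (ψ1.conj ψ2) ≠ V3.f := by
          simp only [eval, ne_eq, conjT_ne_f, heq1, heq2]; exact hφf
        refine ⟨ψ1.conj ψ2, _, ?_,
          RTr.cmST htr1 htr2 hg (fun hb => hne (hb σ))
            (sigOK_C (C.cmc hC hC') hsp), hxy⟩
        simp [eval, heq1, heq2]
      | cmSS h1 h2 hg hnb hsp hsr =>
        simp only [eval, ne_eq, conjT_ne_f] at hφf
        obtain ⟨ψ1, o1, heq1, htr1, ho1⟩ := ih.1 _ _ _ h1 _ hs1 σ hχf.1 hφf.1
        obtain ⟨x', rfl, hx⟩ := roptr_some ho1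
        obtain ⟨ψ2, o2, heq2, htr2, ho2⟩ := ih'.1 _ _ _ h2 _ hs2 σ hχf.2 hφf.2
        obtain ⟨y', rfl, hy⟩ := roptr_some ho2
        have hne : eval σ (ψ1.conj ψ2) ≠ V3.f := by
          simp only [eval, ne_eq, conjT_ne_f, heq1, heq2]; exact hφf
        refine ⟨ψ1.conj ψ2, _, ?_,
          RTr.cmSS htr1 htr2 hg (fun hb => hne (hb σ))
            (sigOK_C (C.cmc hC hC') hsp)
            (sigOK_C (C.parc hx hy) hsr), C.parc hx hy⟩
        simp [eval, heq1, heq2]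
  | encapc H hC ih =>
    refine ⟨?_, sigC (C.encapc H hC)⟩
    intro φ a o htr χ hχ σ hχf hφf
    cases hχ with
    | encap H hs1 =>
      cases htr with
      | encapR H h1 ha =>
        obtain ⟨ψ, o', heq, htr', ho⟩ := ih.1 φ a _ h1 _ hs1 σ hχf hφf
        exact ⟨ψ, Option.map (RT.encap H) o', heq, RTr.encapR H htr' ha,
          ROptR_map_encap H ho⟩

lemma C_isBisim : RIsBisim γ (C (α := α) (Act := Act) γ) := by
  intro u v h
  refine ⟨simC h, RSim_mono (fun x y hxy => C_symm hxy) (simC (C_symm h))⟩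

end CongrMain
/-- Bisimulation equivalence is a congruence for the operators of ctACPps+REC. -/
theorem ctACPpsREC_congruence {α Act : Type} [Fintype α] [Fintype Act]
    (γ : Option Act → Option Act → Option Act)
    (hγcomm : ∀ a b, γ a b = γ b a)
    (hγassoc : ∀ a b c, γ (γ a b) c = γ a (γ b c))
    (hγdelta : ∀ a, γ none a = none)
    (p q p' q' : RT α Act) (φ : Fml α) (H : Set Act)
    (hp : Closed p ∧ WT γ p) (hq : Closed q ∧ WT γ q)
    (hp' : Closed p' ∧ WT γ p') (hq' : Closed q' ∧ WT γ q')
    (h : RBisim γ p q) (h' : RBisim γ p' q') :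
    RBisim γ (.alt p p') (.alt q q') ∧ RBisim γ (.seq p p') (.seq q q') ∧
    RBisim γ (.gc φ p) (.gc φ q) ∧ RBisim γ (.se φ p) (.se φ q) ∧
    RBisim γ (.par p p') (.par q q') ∧ RBisim γ (.lm p p') (.lm q q') ∧
    RBisim γ (.cm p p') (.cm q q') ∧ RBisim γ (.encap H p) (.encap H q) := by
  have hb : RIsBisim γ (C (α := α) (Act := Act) γ) := C_isBisim
  exact ⟨⟨C γ, hb, C.altc (C.base h) (C.base h')⟩,
    ⟨C γ, hb, C.seqc (C.base h) (C.base h')⟩,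
    ⟨C γ, hb, C.gcc φ (C.base h)⟩,
    ⟨C γ, hb, C.sec φ (C.base h)⟩,
    ⟨C γ, hb, C.parc (C.base h) (C.base h')⟩,
    ⟨C γ, hb, C.lmc (C.base h) (C.base h')⟩,
    ⟨C γ, hb, C.cmc (C.base h) (C.base h')⟩,
    ⟨C γ, hb, C.encapc H (C.base h)⟩⟩
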